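/- arXiv:2206.09100 — 5 statements merged into one kernel-verified Lean document; each statement's English description precedes it below -/
import Mathlib

section
/- The matrix J(M) := Σ_{n≥0} M^n/(n+1)! is invertible if and only if no eigenvalue of M belongs to the set {2kπi : k ∈ ℤ, k ≠ 0}. -/
/-- `J(M) = ∑_{k ≥ 0} M^k / (k+1)!`. -/
noncomputable def Jmat {n : ℕ} (M : Matrix (Fin n) (Fin n) ℂ) : Matrix (Fin n) (Fin n) ℂ :=
  ∑' k : ℕ, (((k + 1).factorial : ℂ))⁻¹ • M ^ k


noncomputable def Jfun (z : ℂ) : ℂ := ∑' k : ℕ, (((k + 1).factorial : ℂ))⁻¹ * z ^ k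

lemma Jfun_summable (z : ℂ) : Summable fun k : ℕ => (((k + 1).factorial : ℂ))⁻¹ * z ^ k := by
  apply Summable.of_norm_bounded (Real.summable_pow_div_factorial ‖z‖)
  intro k
  rw [norm_mul, norm_pow, norm_inv]
  simp only [Complex.norm_natCast]
  rw [div_eq_mul_inv, mul_comm]
  apply mul_le_mul_of_nonneg_left _ (pow_nonneg (norm_nonneg z) k)
  apply inv_anti₀
  · exact_mod_cast Nat.factorial_pos k
  · exact_mod_cast Nat.factorial_le (Nat.le_succ k)

lemma Jfun_zero : Jfun 0 = 1 := by
  rw [Jfun, tsum_eq_single 0]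
  · simp
  · intro k hk
    simp [zero_pow hk]

lemma mul_Jfun (z : ℂ) : z * Jfun z = Complex.exp z - 1 := by
  have h1 : Complex.exp z = ∑' k : ℕ, z ^ k / (k.factorial : ℂ) := by
    rw [Complex.exp_eq_exp_ℂ, NormedSpace.exp_eq_tsum_div]
  have hs : Summable fun k : ℕ => z ^ k / (k.factorial : ℂ) := by
    apply Summable.of_norm_bounded (Real.summable_pow_div_factorial ‖z‖)
    intro k
    rw [norm_div, norm_pow]
    simp [Complex.norm_natCast]
  rw [h1, hs.tsum_eq_zero_add]
  simp only [pow_zero, Nat.factorial_zero, Nat.cast_one, div_one]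
  rw [Jfun, ← tsum_mul_left]
  have : ∀ k : ℕ, z * ((((k + 1).factorial : ℂ))⁻¹ * z ^ k) = z ^ (k + 1) / ((k+1).factorial : ℂ) := by
    intro k; rw [div_eq_inv_mul]; ring
  simp only [this]
  ring

lemma Jfun_eq_zero_iff (z : ℂ) :
    Jfun z = 0 ↔ ∃ k : ℤ, k ≠ 0 ∧ z = 2 * (k : ℂ) * (Real.pi : ℂ) * Complex.I := by
  constructor
  · intro h
    have hz : z ≠ 0 := by
      intro h0; rw [h0, Jfun_zero] at h; exact one_ne_zero h
    have : Complex.exp z = 1 := by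
      have := mul_Jfun z; rw [h, mul_zero] at this; linear_combination -this
    obtain ⟨k, hk⟩ := Complex.exp_eq_one_iff.mp this
    refine ⟨k, ?_, ?_⟩
    · rintro rfl; simp at hk; exact hz hk
    · rw [hk]; push_cast; ring
  · rintro ⟨k, hk0, rfl⟩
    have hz : (2 * (k : ℂ) * (Real.pi : ℂ) * Complex.I) ≠ 0 := by
      have hk : (k : ℂ) ≠ 0 := Int.cast_ne_zero.mpr hk0
      have hpi : (Real.pi : ℂ) ≠ 0 := Complex.ofReal_ne_zero.mpr Real.pi_ne_zero
      exact mul_ne_zero (mul_ne_zero (mul_ne_zero two_ne_zero hk) hpi) Complex.I_ne_zero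
    have hexp : Complex.exp (2 * (k : ℂ) * (Real.pi : ℂ) * Complex.I) = 1 := by
      apply Complex.exp_eq_one_iff.mpr ⟨k, by push_cast; ring⟩
    have := mul_Jfun (2 * (k : ℂ) * (Real.pi : ℂ) * Complex.I)
    rw [hexp, sub_self] at this
    exact (mul_eq_zero.mp this).resolve_left hz

namespace JmatAux

variable {n : ℕ} (M : Matrix (Fin n) (Fin n) ℂ)

noncomputable def matBound : ℝ := (∑ p : Fin n × Fin n, ‖M p.1 p.2‖) + 1

lemma one_le_matBound : 1 ≤ matBound M := by
  have : 0 ≤ ∑ p : Fin n × Fin n, ‖M p.1 p.2‖ :=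
    Finset.sum_nonneg fun p _ => norm_nonneg _
  unfold matBound; linarith

lemma entry_bound (k : ℕ) (i j : Fin n) : ‖(M ^ k) i j‖ ≤ matBound M ^ k := by
  induction k generalizing i j with
  | zero =>
    simp only [pow_zero, Matrix.one_apply]
    split <;> simp
  | succ k ih =>
    rw [pow_succ, Matrix.mul_apply]
    calc ‖∑ l, (M ^ k) i l * M l j‖ ≤ ∑ l, ‖(M ^ k) i l * M l j‖ := norm_sum_le _ _
      _ ≤ ∑ l, matBound M ^ k * ‖M l j‖ := by
          refine Finset.sum_le_sum fun l _ => ?_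
          rw [norm_mul]
          exact mul_le_mul_of_nonneg_right (ih i l) (norm_nonneg _)
      _ = matBound M ^ k * ∑ l, ‖M l j‖ := by rw [Finset.mul_sum]
      _ ≤ matBound M ^ k * matBound M := by
          refine mul_le_mul_of_nonneg_left ?_ (pow_nonneg (by
            linarith [one_le_matBound M]) k)
          have h1 : ∑ l, ‖M l j‖ ≤ ∑ p : Fin n × Fin n, ‖M p.1 p.2‖ := by
            rw [Fintype.sum_prod_type]
            refine Finset.sum_le_sum fun l _ => ?_
            exact Finset.single_le_sum (f := fun b => ‖M l b‖)
              (fun b _ => norm_nonneg _) (Finset.mem_univ j)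
          unfold matBound; linarith
      _ = matBound M ^ (k + 1) := by rw [pow_succ]

lemma entry_summable (i j : Fin n) :
    Summable fun k : ℕ => (((k + 1).factorial : ℂ))⁻¹ * (M ^ k) i j := by
  apply Summable.of_norm_bounded (Real.summable_pow_div_factorial (matBound M))
  intro k
  rw [norm_mul, norm_inv, Complex.norm_natCast, div_eq_mul_inv]
  have h0 : (0:ℝ) < (k.factorial : ℝ) := by exact_mod_cast Nat.factorial_pos k
  calc ((((k+1).factorial : ℝ))⁻¹) * ‖(M ^ k) i j‖
      ≤ (((k.factorial : ℝ))⁻¹) * (matBound M ^ k) := by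
        apply mul_le_mul
        · apply inv_anti₀ h0
          exact_mod_cast Nat.factorial_le (Nat.le_succ k)
        · exact entry_bound M k i j
        · exact norm_nonneg _
        · positivity
    _ = matBound M ^ k * ((k.factorial : ℝ))⁻¹ := mul_comm _ _

lemma summable : Summable fun k : ℕ => (((k + 1).factorial : ℂ))⁻¹ • M ^ k := by
  refine Pi.summable.mpr ?_
  intro i
  rw [Pi.summable]
  intro j
  simpa [Matrix.smul_apply, smul_eq_mul] using entry_summable M i j

lemma Jmat_apply (i j : Fin n) :
    Jmat M i j = ∑' k : ℕ, (((k + 1).factorial : ℂ))⁻¹ * (M ^ k) i j := by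
  have h2 : HasSum (fun k : ℕ => ((((k + 1).factorial : ℂ))⁻¹ • M ^ k) i j) (Jmat M i j) :=
    Pi.hasSum.mp (Pi.hasSum.mp (summable M).hasSum i) j
  refine (HasSum.tsum_eq ?_).symm; simpa [Matrix.smul_apply, smul_eq_mul] using h2

end JmatAux

namespace JmatAux
variable {n : ℕ} (M : Matrix (Fin n) (Fin n) ℂ)

lemma commute_Jmat : M * Jmat M = Jmat M * M := by
  ext i j
  rw [Matrix.mul_apply, Matrix.mul_apply]
  have h1 : ∀ l : Fin n, M i l * Jmat M l j
      = ∑' k : ℕ, M i l * ((((k + 1).factorial : ℂ))⁻¹ * (M ^ k) l j) := by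
    intro l; rw [Jmat_apply, tsum_mul_left]
  have h2 : ∀ l : Fin n, Jmat M i l * M l j
      = ∑' k : ℕ, ((((k + 1).factorial : ℂ))⁻¹ * (M ^ k) i l) * M l j := by
    intro l; rw [Jmat_apply, tsum_mul_right]
  simp only [h1, h2]
  rw [← Summable.tsum_finsetSum (fun l _ => (entry_summable M l j).mul_left (M i l)),
      ← Summable.tsum_finsetSum (fun l _ => (entry_summable M i l).mul_right (M l j))]
  congr 1
  funext k
  have e1 : ∑ l, M i l * ((((k + 1).factorial : ℂ))⁻¹ * (M ^ k) l j)
      = (((k + 1).factorial : ℂ))⁻¹ * (M * M ^ k) i j := by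
    rw [Matrix.mul_apply, Finset.mul_sum]
    congr 1; funext l; ring
  have e2 : ∑ l, ((((k + 1).factorial : ℂ))⁻¹ * (M ^ k) i l) * M l j
      = (((k + 1).factorial : ℂ))⁻¹ * (M ^ k * M) i j := by
    rw [Matrix.mul_apply, Finset.mul_sum]
    congr 1; funext l; ring
  rw [e1, e2, ← pow_succ, ← pow_succ']

end JmatAux

namespace JmatAux
variable {n : ℕ} (M : Matrix (Fin n) (Fin n) ℂ)

lemma pow_mulVec_eigen {v : Fin n → ℂ} {lam : ℂ} (hv : M.mulVec v = lam • v) (k : ℕ) :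
    (M ^ k).mulVec v = lam ^ k • v := by
  induction k with
  | zero => simp [Matrix.one_mulVec]
  | succ k ih =>
    rw [pow_succ', ← Matrix.mulVec_mulVec, ih, Matrix.mulVec_smul, hv, smul_smul, ← pow_succ]

lemma Jmat_mulVec_eigen {v : Fin n → ℂ} {lam : ℂ} (hv : M.mulVec v = lam • v) :
    (Jmat M).mulVec v = Jfun lam • v := by
  funext i
  show ∑ j, Jmat M i j * v j = (Jfun lam • v) i
  have h1 : ∀ j : Fin n, Jmat M i j * v j
      = ∑' k : ℕ, ((((k + 1).factorial : ℂ))⁻¹ * (M ^ k) i j) * v j := by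
    intro j; rw [Jmat_apply, tsum_mul_right]
  simp only [h1]
  rw [← Summable.tsum_finsetSum (fun j _ => (entry_summable M i j).mul_right (v j))]
  have h2 : ∀ k : ℕ, (∑ j, ((((k + 1).factorial : ℂ))⁻¹ * (M ^ k) i j) * v j)
      = ((((k + 1).factorial : ℂ))⁻¹ * lam ^ k) * v i := by
    intro k
    have : ∑ j, (M ^ k) i j * v j = lam ^ k * v i := by
      have := congrFun (pow_mulVec_eigen M hv k) i
      simpa [Matrix.mulVec, dotProduct] using this
    calc (∑ j, ((((k + 1).factorial : ℂ))⁻¹ * (M ^ k) i j) * v j)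
        = (((k + 1).factorial : ℂ))⁻¹ * ∑ j, (M ^ k) i j * v j := by
          rw [Finset.mul_sum]; congr 1; funext j; ring
      _ = ((((k + 1).factorial : ℂ))⁻¹ * lam ^ k) * v i := by rw [this]; ring
  simp only [h2]
  rw [tsum_mul_right]
  rfl

lemma mem_spectrum_iff_eigen (lam : ℂ) :
    lam ∈ spectrum ℂ M ↔ ∃ v, v ≠ 0 ∧ M.mulVec v = lam • v := by
  rw [spectrum.mem_iff, Matrix.isUnit_iff_isUnit_det, isUnit_iff_ne_zero, not_not,
    ← Matrix.exists_mulVec_eq_zero_iff]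
  constructor
  · rintro ⟨v, hv0, hv⟩
    refine ⟨v, hv0, ?_⟩
    rw [Algebra.algebraMap_eq_smul_one, Matrix.sub_mulVec, Matrix.smul_mulVec,
      Matrix.one_mulVec] at hv
    rw [← sub_eq_zero]
    rw [sub_eq_zero] at hv ⊢
    exact hv.symm
  · rintro ⟨v, hv0, hv⟩
    refine ⟨v, hv0, ?_⟩
    rw [Algebra.algebraMap_eq_smul_one, Matrix.sub_mulVec, Matrix.smul_mulVec,
      Matrix.one_mulVec, hv, sub_self]

end JmatAux


/-- `J(M) = ∑_{k≥0} M^k/(k+1)!` is invertible if and only if no eigenvalue of `M`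
belongs to `{2kπi : k ∈ ℤ, k ≠ 0}`. -/
theorem Jmat_isUnit_iff {n : ℕ} (M : Matrix (Fin n) (Fin n) ℂ) :
    IsUnit (Jmat M) ↔
      ∀ lam ∈ spectrum ℂ M, ∀ k : ℤ, k ≠ 0 → lam ≠ 2 * (k : ℂ) * (Real.pi : ℂ) * Complex.I := by
  open JmatAux in
  set_option maxHeartbeats 1000000 in
  constructor
  · intro hU lam hlam k hk hlamk
    obtain ⟨v, hv0, hv⟩ := (mem_spectrum_iff_eigen M lam).mp hlam
    have h1 : (Jmat M).mulVec v = Jfun lam • v := Jmat_mulVec_eigen M hv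
    have h2 : Jfun lam = 0 := (Jfun_eq_zero_iff lam).mpr ⟨k, hk, hlamk⟩
    rw [h2, zero_smul] at h1
    have hdet : (Jmat M).det = 0 := Matrix.exists_mulVec_eq_zero_iff.mp ⟨v, hv0, h1⟩
    rw [Matrix.isUnit_iff_isUnit_det, isUnit_iff_ne_zero] at hU
    exact hU hdet
  · intro h
    by_contra hU
    rw [Matrix.isUnit_iff_isUnit_det, isUnit_iff_ne_zero, not_not] at hU
    obtain ⟨v, hv0, hv⟩ := Matrix.exists_mulVec_eq_zero_iff.mpr hU
    set K := LinearMap.ker (Jmat M).mulVecLin with hKdef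
    have hvK : v ∈ K := by
      simp only [hKdef, LinearMap.mem_ker, Matrix.mulVecLin_apply]; exact hv
    have hMK : ∀ x ∈ K, M.mulVec x ∈ K := by
      intro x hx
      simp only [hKdef, LinearMap.mem_ker, Matrix.mulVecLin_apply] at hx ⊢
      rw [Matrix.mulVec_mulVec, ← commute_Jmat, ← Matrix.mulVec_mulVec, hx, Matrix.mulVec_zero]
    let g : K →ₗ[ℂ] K := (M.mulVecLin).restrict (fun x hx => by
      simpa [Matrix.mulVecLin_apply] using hMK x hx)
    haveI : Nontrivial K := nontrivial_of_ne ⟨v, hvK⟩ 0 (by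
      simp only [ne_eq, Submodule.mk_eq_zero]; exact hv0)
    obtain ⟨mu, hmu⟩ := Module.End.exists_eigenvalue g
    obtain ⟨x, hx⟩ := hmu.exists_hasEigenvector
    have hxa : M.mulVec (x : Fin n → ℂ) = mu • (x : Fin n → ℂ) := by
      have h2 := congrArg (Subtype.val) hx.apply_eq_smul
      rw [LinearMap.restrict_coe_apply, Matrix.mulVecLin_apply, Submodule.coe_smul] at h2
      exact h2
    have hx0 : (x : Fin n → ℂ) ≠ 0 := fun h0 => hx.right (Subtype.ext h0)
    have hmuspec : mu ∈ spectrum ℂ M := (mem_spectrum_iff_eigen M mu).mpr ⟨x, hx0, hxa⟩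
    have hker : (Jmat M).mulVec (x : Fin n → ℂ) = 0 := by
      have hker0 : (Jmat M).mulVecLin (x : Fin n → ℂ) = 0 := x.2
      rwa [Matrix.mulVecLin_apply] at hker0
    have hzero : Jfun mu • (x : Fin n → ℂ) = 0 := by
      rw [← Jmat_mulVec_eigen M hxa]; exact hker
    have hJ0 : Jfun mu = 0 := by
      by_contra h0
      exact hx0 ((smul_eq_zero.mp hzero).resolve_left h0)
    obtain ⟨k, hk, hmu2⟩ := (Jfun_eq_zero_iff mu).mp hJ0
    exact h mu hmuspec k hk hmu2
end

section
/- If f₀ satisfies f₀(X₁X₂) = f₀(X₁)X₂ + X₁f₀(X₂) for all X₁, X₂ in a matrix group G, and X, X̄ are differentiable curves in G satisfying Ẋ = X v_b + v_g X + f₀(X) and X̄' = X̄ v_b + X̄ w + v_g X̄ + f₀(X̄), then the left-invariant error η_L = X^{-1} X̄ satisfies η̇_L = −v_b η_L + η_L v_b + η_L w + f₀(η_L). -/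
attribute [local instance] Matrix.linftyOpNormedRing Matrix.linftyOpNormedAlgebra

/-- If `f₀` satisfies `f₀(X₁X₂) = f₀(X₁)X₂ + X₁f₀(X₂)` on the group, and
`X, X̄` are differentiable curves in the group with `Ẋ = X v_b + v_g X + f₀(X)` and
`X̄' = X̄ v_b + X̄ w + v_g X̄ + f₀(X̄)`, then the left-invariant error `η_L = X⁻¹ X̄` satisfies
`η̇_L = −v_b η_L + η_L v_b + η_L w + f₀(η_L)`. -/
theorem left_invariant_error_dynamics (n : ℕ)
    (f₀ : Matrix (Fin n) (Fin n) ℝ → Matrix (Fin n) (Fin n) ℝ)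
    (hf : ∀ X₁ X₂ : Matrix (Fin n) (Fin n) ℝ, IsUnit X₁ → IsUnit X₂ →
      f₀ (X₁ * X₂) = f₀ X₁ * X₂ + X₁ * f₀ X₂)
    (X Xb vb vg w : ℝ → Matrix (Fin n) (Fin n) ℝ)
    (hXunit : ∀ t, IsUnit (X t)) (hXbunit : ∀ t, IsUnit (Xb t))
    (hX : ∀ t, HasDerivAt X (X t * vb t + vg t * X t + f₀ (X t)) t)
    (hXb : ∀ t, HasDerivAt Xb (Xb t * vb t + Xb t * w t + vg t * Xb t + f₀ (Xb t)) t)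
    (t : ℝ) :
    HasDerivAt (fun s => (X s)⁻¹ * Xb s)
      (-(vb t) * ((X t)⁻¹ * Xb t) + ((X t)⁻¹ * Xb t) * vb t
        + ((X t)⁻¹ * Xb t) * w t + f₀ ((X t)⁻¹ * Xb t)) t := by
  have hu := hXunit t
  set A := X t with hA
  set B := Xb t with hB
  set D := X t * vb t + vg t * X t + f₀ (X t) with hD
  -- derivative of the inverse
  have hinv : HasDerivAt (fun s => (X s)⁻¹) (-(A⁻¹ * D * A⁻¹)) t := by
    have h1 : HasFDerivAt Ring.inverse
        (-(ContinuousLinearMap.mulLeftRight ℝ _ ↑hu.unit⁻¹ ↑hu.unit⁻¹)) (X t) :=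
      hasFDerivAt_ringInverse hu.unit
    have h2 := h1.comp_hasDerivAt t (hX t)
    have h3 : Ring.inverse ∘ X = fun s => (X s)⁻¹ := by
      funext s; simp [Function.comp, Matrix.nonsing_inv_eq_ringInverse]
    have h4 : (↑hu.unit⁻¹ : Matrix (Fin n) (Fin n) ℝ) = A⁻¹ := by
      rw [Matrix.nonsing_inv_eq_ringInverse, ← Ring.inverse_unit hu.unit, hu.unit_spec]
    rw [h3] at h2
    convert h2 using 1
    case e'_4 | e'_5 | e'_6 => rfl
    simp [h4, mul_assoc]
    rfl
  have h5 := hinv.mul (hXb t)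
  convert h5 using 1
  case e'_4 | e'_5 | e'_6 | e'_8 => rfl
  have hA1 : A⁻¹ * A = 1 := Matrix.nonsing_inv_mul A (Matrix.isUnit_iff_isUnit_det A |>.mp hu)
  have hA2 : A * A⁻¹ = 1 := Matrix.mul_nonsing_inv A (Matrix.isUnit_iff_isUnit_det A |>.mp hu)
  have hηu : IsUnit (A⁻¹ * B) :=
    (Matrix.isUnit_nonsing_inv_iff.mpr hu).mul (hXbunit t)
  have hBeq : A * (A⁻¹ * B) = B := by rw [← mul_assoc, hA2, one_mul]
  have hfB : f₀ B = f₀ A * (A⁻¹ * B) + A * f₀ (A⁻¹ * B) := by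
    have h := hf A (A⁻¹ * B) hu hηu; rwa [hBeq] at h
  rw [hD, ← hA, ← hB, hfB]
  simp only [mul_add, add_mul, neg_mul, mul_neg, ← mul_assoc, hA1]
  simp only [mul_assoc, hA1, hBeq]
  noncomm_ring
end

section
/- If f₀ satisfies f₀(X₁X₂) = f₀(X₁)X₂ + X₁f₀(X₂) for all X₁, X₂ in a matrix group G, and X, X̄ satisfy Ẋ = X v_b + v_g X + f₀(X) and X̄' = X̄ v_b + X̄ w + v_g X̄ + f₀(X̄), then the right-invariant error η_R = X̄ X^{-1} satisfies η̇_R = v_g η_R − η_R v_g + (Ad_{X̄} w) η_R + f₀(η_R). -/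
attribute [local instance] Matrix.linftyOpNormedRing Matrix.linftyOpNormedAlgebra

/-- If `f₀` satisfies `f₀(X₁X₂) = f₀(X₁)X₂ + X₁f₀(X₂)` on the group, and
`X, X̄` satisfy `Ẋ = X v_b + v_g X + f₀(X)` and `X̄' = X̄ v_b + X̄ w + v_g X̄ + f₀(X̄)`, then the
right-invariant error `η_R = X̄ X⁻¹` satisfies
`η̇_R = v_g η_R − η_R v_g + (Ad_{X̄} w) η_R + f₀(η_R)`, where `Ad_{X̄} w = X̄ w X̄⁻¹`. -/
theorem right_invariant_error_dynamics (n : ℕ)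
    (f₀ : Matrix (Fin n) (Fin n) ℝ → Matrix (Fin n) (Fin n) ℝ)
    (hf : ∀ X₁ X₂ : Matrix (Fin n) (Fin n) ℝ, IsUnit X₁ → IsUnit X₂ →
      f₀ (X₁ * X₂) = f₀ X₁ * X₂ + X₁ * f₀ X₂)
    (X Xb vb vg w : ℝ → Matrix (Fin n) (Fin n) ℝ)
    (hXunit : ∀ t, IsUnit (X t)) (hXbunit : ∀ t, IsUnit (Xb t))
    (hX : ∀ t, HasDerivAt X (X t * vb t + vg t * X t + f₀ (X t)) t)
    (hXb : ∀ t, HasDerivAt Xb (Xb t * vb t + Xb t * w t + vg t * Xb t + f₀ (Xb t)) t)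
    (t : ℝ) :
    HasDerivAt (fun s => Xb s * (X s)⁻¹)
      (vg t * (Xb t * (X t)⁻¹) - (Xb t * (X t)⁻¹) * vg t
        + (Xb t * w t * (Xb t)⁻¹) * (Xb t * (X t)⁻¹) + f₀ (Xb t * (X t)⁻¹)) t := by
  -- derivative of the inverse
  have hinv : HasDerivAt (fun s => (X s)⁻¹)
      (-((X t)⁻¹ * (X t * vb t + vg t * X t + f₀ (X t)) * (X t)⁻¹)) t := by
    have h1 := (hasFDerivAt_ringInverse (𝕜 := ℝ) (hXunit t).unit).comp_hasDerivAt t (hX t)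
    have hco : (fun s => Ring.inverse (X s)) = fun s => (X s)⁻¹ := by
      funext s; rw [Matrix.nonsing_inv_eq_ringInverse]
    have hcoe : ((hXunit t).unit⁻¹ : (Matrix (Fin n) (Fin n) ℝ)ˣ).val = (X t)⁻¹ := by
      rw [Matrix.coe_units_inv, (hXunit t).unit_spec]
    simp [Function.comp_def, hco, hcoe, ContinuousLinearMap.mulLeftRight_apply] at h1
    exact h1
  have hprod := (hXb t).mul hinv
  convert hprod using 1
  case e'_4 => rfl
  case e'_5 => rfl
  case e'_6 => rfl
  case e'_8 => rfl
  set A := X t with hA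
  set B := Xb t with hB
  have hA1 : A⁻¹ * A = 1 :=
    Matrix.nonsing_inv_mul _ ((Matrix.isUnit_iff_isUnit_det _).mp (hXunit t))
  have hA2 : A * A⁻¹ = 1 :=
    Matrix.mul_nonsing_inv _ ((Matrix.isUnit_iff_isUnit_det _).mp (hXunit t))
  have hB1 : (B⁻¹) * B = 1 :=
    Matrix.nonsing_inv_mul _ ((Matrix.isUnit_iff_isUnit_det _).mp (hXbunit t))
  have hA1' : ∀ M : Matrix (Fin n) (Fin n) ℝ, A⁻¹ * (A * M) = M := by
    intro M; rw [← mul_assoc, hA1, one_mul]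
  have hA2' : ∀ M : Matrix (Fin n) (Fin n) ℝ, A * (A⁻¹ * M) = M := by
    intro M; rw [← mul_assoc, hA2, one_mul]
  have hB1' : ∀ M : Matrix (Fin n) (Fin n) ℝ, B⁻¹ * (B * M) = M := by
    intro M; rw [← mul_assoc, hB1, one_mul]
  -- Leibniz identity applied to η_R * X = X̄
  have hfo : f₀ (B * A⁻¹) = f₀ B * A⁻¹ - B * A⁻¹ * f₀ A * A⁻¹ := by
    have hη : IsUnit (B * A⁻¹) := by
      refine (hXbunit t).mul ?_
      rw [Matrix.isUnit_iff_isUnit_det]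
      exact Matrix.isUnit_nonsing_inv_det _ ((Matrix.isUnit_iff_isUnit_det _).mp (hXunit t))
    have h := hf (B * A⁻¹) A hη (hXunit t)
    have hBA : B * A⁻¹ * A = B := by rw [mul_assoc, hA1, mul_one]
    rw [hBA] at h
    have : f₀ (B * A⁻¹) * A = f₀ B - B * A⁻¹ * f₀ A := by
      rw [h]; abel
    calc f₀ (B * A⁻¹) = f₀ (B * A⁻¹) * A * A⁻¹ := by rw [mul_assoc, hA2, mul_one]
      _ = (f₀ B - B * A⁻¹ * f₀ A) * A⁻¹ := by rw [this]
      _ = f₀ B * A⁻¹ - B * A⁻¹ * f₀ A * A⁻¹ := by rw [sub_mul]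
  rw [hfo]
  simp only [mul_add, add_mul, sub_mul, mul_sub, neg_mul, mul_neg, neg_add, mul_assoc,
    hA1, hA2, hB1, hA1', hA2', hB1', mul_one, one_mul]
  abel
end

section
/- For a differentiable matrix-valued curve X(t), the derivative of its exponential satisfies d/dt e^{X(t)} = e^{X(t)} · J(−ad_{X(t)})(Ẋ(t)), where J(M) = Σ_{n≥0} M^n/(n+1)! applied to the operator −ad_{X(t)}, i.e., d/dt e^{X} = e^{X} Σ_{n≥0} (−1)^n (ad_X)^n(Ẋ)/(n+1)!. -/
set_option maxHeartbeats 1000000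
set_option synthInstance.maxHeartbeats 400000
set_option linter.unusedSectionVars false
set_option linter.unnecessarySimpa false
set_option linter.unusedTactic false

open NormedSpace Finset

namespace ExpDerivAux

variable {𝔸 : Type*} [NormedRing 𝔸] [NormedAlgebra ℝ 𝔸] [CompleteSpace 𝔸]

noncomputable def lm (a : 𝔸) : 𝔸 →L[ℝ] 𝔸 := ContinuousLinearMap.mul ℝ 𝔸 a
noncomputable def rm (a : 𝔸) : 𝔸 →L[ℝ] 𝔸 := (ContinuousLinearMap.mul ℝ 𝔸).flip a

@[simp] lemma lm_apply (a x : 𝔸) : lm a x = a * x := rfl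
@[simp] lemma rm_apply (a x : 𝔸) : rm a x = x * a := rfl

noncomputable def lmRing : 𝔸 →+* (𝔸 →L[ℝ] 𝔸) where
  toFun := lm
  map_one' := by ext x; simp
  map_mul' a b := by ext x; simp [ContinuousLinearMap.mul_apply, mul_assoc]
  map_zero' := by ext x; simp
  map_add' a b := by ext x; simp [add_mul]

lemma lm_pow (a : 𝔸) (k : ℕ) : lm (a ^ k) = (lm a) ^ k := map_pow lmRing a k

lemma rm_pow (a : 𝔸) (k : ℕ) : rm (a ^ k) = (rm a) ^ k := by
  induction k with
  | zero => ext x; simp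
  | succ k ih =>
      ext x
      rw [pow_succ']
      simp only [ContinuousLinearMap.mul_apply, rm_apply, ← ih, pow_succ, mul_assoc]

lemma commute_lm_rm (a b : 𝔸) : Commute (lm a) (rm b) := by
  ext x; simp [ContinuousLinearMap.mul_apply, mul_assoc]

lemma norm_clm_pow_le (M : 𝔸 →L[ℝ] 𝔸) (k : ℕ) : ‖M ^ k‖ ≤ ‖M‖ ^ k := by
  induction k with
  | zero => rw [pow_zero, pow_zero]; exact ContinuousLinearMap.norm_id_le
  | succ k ih =>
      rw [pow_succ, pow_succ]
      exact (norm_mul_le _ _).trans (by gcongr)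

lemma norm_pow_le_aux (Y : 𝔸) (k : ℕ) :
    ‖Y ^ k‖ ≤ max 1 ‖(1 : 𝔸)‖ * ‖Y‖ ^ k := by
  induction k with
  | zero => simpa using le_max_right 1 ‖(1:𝔸)‖
  | succ k ih =>
      calc ‖Y ^ (k+1)‖ = ‖Y * Y ^ k‖ := by rw [pow_succ']
        _ ≤ ‖Y‖ * ‖Y ^ k‖ := norm_mul_le _ _
        _ ≤ ‖Y‖ * (max 1 ‖(1:𝔸)‖ * ‖Y‖ ^ k) := by gcongr
        _ = max 1 ‖(1:𝔸)‖ * ‖Y‖ ^ (k+1) := by ring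

/-- The Fréchet derivative of `Y ↦ Y ^ (m+1)`. -/
noncomputable def Qd (m : ℕ) (Y : 𝔸) : 𝔸 →L[ℝ] 𝔸 :=
  ∑ k ∈ range (m + 1), (lm (Y ^ k)).comp (rm (Y ^ (m - k)))

lemma Qd_apply (m : ℕ) (Y H : 𝔸) :
    Qd m Y H = ∑ k ∈ range (m + 1), Y ^ k * (H * Y ^ (m - k)) := by
  simp [Qd, ContinuousLinearMap.sum_apply]

lemma hasFDerivAt_pow_succ (m : ℕ) (Y : 𝔸) :
    HasFDerivAt (fun Z : 𝔸 => Z ^ (m + 1)) (Qd m Y) Y := by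
  induction m with
  | zero =>
      have h0 : Qd 0 Y = ContinuousLinearMap.id ℝ 𝔸 := by
        ext H; simp [Qd_apply]
      simp only [zero_add, pow_one, h0]
      exact hasFDerivAt_id (𝕜 := ℝ) Y
  | succ m ih =>
      have h : HasFDerivAt (fun Z : 𝔸 => Z * Z ^ (m + 1))
          (Y • Qd m Y + (ContinuousLinearMap.id ℝ 𝔸).smulRight (Y ^ (m + 1))) Y :=
        (hasFDerivAt_id (𝕜 := ℝ) Y).mul' ih
      have hfun : (fun Z : 𝔸 => Z * Z ^ (m + 1)) = fun Z : 𝔸 => Z ^ (m + 2) := by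
        funext Z; rw [← pow_succ']
      rw [hfun] at h
      convert h using 1
      ext H
      rw [Qd_apply, Finset.sum_range_succ']
      have hterm : ∀ k ∈ range (m + 1),
          Y ^ (k+1) * (H * Y ^ (m + 1 - (k+1))) = Y * (Y ^ k * (H * Y ^ (m - k))) := by
        intro k _
        rw [Nat.succ_sub_succ, pow_succ', mul_assoc]
      rw [Finset.sum_congr rfl hterm, ← Finset.mul_sum]
      simp [ContinuousLinearMap.add_apply, ContinuousLinearMap.smul_apply,
        ContinuousLinearMap.smulRight_apply, ContinuousLinearMap.id_apply,
        smul_eq_mul, Qd_apply, add_comm]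

lemma norm_Qd_le (m : ℕ) (Y : 𝔸) :
    ‖Qd m Y‖ ≤ (m + 1) * ((max 1 ‖(1:𝔸)‖) ^ 2 * ‖Y‖ ^ m) := by
  set M := max 1 ‖(1:𝔸)‖ with hM
  refine ContinuousLinearMap.opNorm_le_bound _ (by positivity) fun H => ?_
  rw [Qd_apply]
  calc ‖∑ k ∈ range (m+1), Y ^ k * (H * Y ^ (m - k))‖
      ≤ ∑ k ∈ range (m+1), ‖Y ^ k * (H * Y ^ (m - k))‖ := norm_sum_le _ _
    _ ≤ ∑ _k ∈ range (m+1), M ^ 2 * ‖Y‖ ^ m * ‖H‖ := by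
        refine Finset.sum_le_sum fun k hk => ?_
        have hkm : k ≤ m := Nat.lt_succ_iff.mp (Finset.mem_range.mp hk)
        have h1 : ‖Y ^ k * (H * Y ^ (m - k))‖ ≤ ‖Y ^ k‖ * (‖H‖ * ‖Y ^ (m - k)‖) :=
          (norm_mul_le _ _).trans (by gcongr; exact norm_mul_le _ _)
        have h2 : ‖Y ^ k‖ * (‖H‖ * ‖Y ^ (m - k)‖)
            ≤ (M * ‖Y‖ ^ k) * (‖H‖ * (M * ‖Y‖ ^ (m - k))) := by
          gcongr
          · exact norm_pow_le_aux Y k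
          · exact norm_pow_le_aux Y (m - k)
        have h3 : (M * ‖Y‖ ^ k) * (‖H‖ * (M * ‖Y‖ ^ (m - k))) = M ^ 2 * ‖Y‖ ^ m * ‖H‖ := by
          have : ‖Y‖ ^ k * ‖Y‖ ^ (m - k) = ‖Y‖ ^ m := by
            rw [← pow_add, Nat.add_sub_cancel' hkm]
          rw [← this]; ring
        linarith
    _ = (m + 1) * (M ^ 2 * ‖Y‖ ^ m) * ‖H‖ := by
        rw [Finset.sum_const, Finset.card_range]
        push_cast
        ring

/-- The `m`-th term of the derivative series of `exp`. -/
noncomputable def Pd : ℕ → 𝔸 → (𝔸 →L[ℝ] 𝔸)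
  | 0, _ => 0
  | (m + 1), Y => (((m + 1).factorial : ℝ))⁻¹ • Qd m Y

lemma hasFDerivAt_term (m : ℕ) (Y : 𝔸) :
    HasFDerivAt (fun Z : 𝔸 => ((m.factorial : ℝ))⁻¹ • Z ^ m) (Pd m Y) Y := by
  cases m with
  | zero =>
      have hfun : (fun Z : 𝔸 => ((Nat.factorial 0 : ℝ))⁻¹ • Z ^ 0)
          = fun _ : 𝔸 => ((Nat.factorial 0 : ℝ))⁻¹ • (1 : 𝔸) := by
        funext Z; rw [pow_zero]
      rw [hfun]
      show HasFDerivAt _ (0 : 𝔸 →L[ℝ] 𝔸) Y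
      exact hasFDerivAt_const _ Y
  | succ m =>
      exact (hasFDerivAt_pow_succ m Y).const_smul (((m + 1).factorial : ℝ))⁻¹

lemma norm_Pd_le (m : ℕ) (Y : 𝔸) :
    ‖Pd m Y‖ ≤ ((max 1 ‖(1:𝔸)‖) ^ 2) * (‖Y‖ ^ (m - 1) / (m - 1).factorial) := by
  cases m with
  | zero => simp [Pd, Nat.factorial]
  | succ m =>
      have h1 : ‖Pd (m+1) Y‖ = (((m + 1).factorial : ℝ))⁻¹ * ‖Qd m Y‖ := by
        have := norm_smul ((((m + 1).factorial : ℝ))⁻¹) (Qd m Y)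
        rw [Real.norm_eq_abs, abs_of_nonneg (by positivity)] at this
        exact this
      rw [h1]
      have hfac : ((m + 1).factorial : ℝ) = (m + 1) * m.factorial := by
        rw [Nat.factorial_succ]; push_cast [Nat.factorial_succ]; ring
      have hfacpos : (0:ℝ) < m.factorial := by exact_mod_cast m.factorial_pos
      have h2 := norm_Qd_le m Y
      have h3 : (((m + 1).factorial : ℝ))⁻¹ * ‖Qd m Y‖
          ≤ (((m + 1).factorial : ℝ))⁻¹ * ((m + 1) * ((max 1 ‖(1:𝔸)‖) ^ 2 * ‖Y‖ ^ m)) :=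
        mul_le_mul_of_nonneg_left h2 (by positivity)
      refine h3.trans (le_of_eq ?_)
      rw [hfac, Nat.succ_sub_one]
      have hm1 : (0:ℝ) < (m:ℝ) + 1 := by positivity
      field_simp

lemma summable_u (A : 𝔸) :
    Summable (fun m : ℕ =>
      ((max 1 ‖(1:𝔸)‖) ^ 2) * ((‖A‖ + 1) ^ (m - 1) / (m - 1).factorial)) := by
  rw [← summable_nat_add_iff 1]
  refine ((Real.summable_pow_div_factorial (‖A‖ + 1)).mul_left
    ((max 1 ‖(1:𝔸)‖) ^ 2)).congr fun m => ?_
  simp [Nat.succ_sub_one]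

lemma hasFDerivAt_exp_aux (A : 𝔸) : HasFDerivAt (exp) (∑' m : ℕ, Pd m A) A := by
  have hball : ∀ Y ∈ Metric.ball (0:𝔸) (‖A‖ + 1), ∀ m : ℕ,
      ‖Pd m Y‖ ≤ ((max 1 ‖(1:𝔸)‖) ^ 2) * ((‖A‖ + 1) ^ (m - 1) / (m - 1).factorial) := by
    intro Y hY m
    have hYr : ‖Y‖ ≤ ‖A‖ + 1 := le_of_lt (by simpa [mem_ball_zero_iff] using hY)
    refine (norm_Pd_le m Y).trans ?_
    gcongr
  have hA : A ∈ Metric.ball (0:𝔸) (‖A‖ + 1) := by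
    rw [mem_ball_zero_iff]; linarith
  have hsum0 : Summable fun m : ℕ => ((m.factorial : ℝ))⁻¹ • A ^ m := expSeries_summable' A
  have H := hasFDerivAt_tsum_of_isPreconnected (summable_u A) Metric.isOpen_ball
    (convex_ball (0:𝔸) (‖A‖ + 1)).isPreconnected
    (fun m Y _ => hasFDerivAt_term m Y) (fun m Y hY => hball Y hY m) hA hsum0 hA
  have hfun : (fun Y : 𝔸 => ∑' m : ℕ, ((m.factorial:ℝ))⁻¹ • Y ^ m) = exp := by
    funext Y; rw [exp_eq_tsum ℝ]
  rwa [hfun] at H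

lemma summable_Pd (A : 𝔸) : Summable fun m : ℕ => Pd m A := by
  refine Summable.of_norm_bounded (summable_u A) fun m => ?_
  refine (norm_Pd_le m A).trans ?_
  gcongr
  linarith [norm_nonneg A]

/-- `Qd m A` expressed via powers of the left/right multiplication operators. -/
noncomputable def Qop (A : 𝔸) (m : ℕ) : 𝔸 →L[ℝ] 𝔸 :=
  ∑ k ∈ range (m + 1), (lm A) ^ k * (rm A) ^ (m - k)

lemma Qd_eq_Qop (A : 𝔸) (m : ℕ) : Qd m A = Qop A m := by
  ext H
  rw [Qd_apply, Qop, ContinuousLinearMap.sum_apply]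
  refine Finset.sum_congr rfl fun k _ => ?_
  rw [← lm_pow, ← rm_pow, ContinuousLinearMap.mul_apply]
  simp

lemma norm_Qop_le (A : 𝔸) (m : ℕ) :
    ‖Qop A m‖ ≤ (m + 1) * (max ‖lm A‖ ‖rm A‖) ^ m := by
  set ρ := max ‖lm A‖ ‖rm A‖ with hρ
  have hρ0 : 0 ≤ ρ := le_trans (norm_nonneg _) (le_max_left _ _)
  calc ‖Qop A m‖ ≤ ∑ k ∈ range (m+1), ‖(lm A) ^ k * (rm A) ^ (m-k)‖ := norm_sum_le _ _
    _ ≤ ∑ _k ∈ range (m+1), ρ ^ m := by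
        refine Finset.sum_le_sum fun k hk => ?_
        have hkm : k ≤ m := Nat.lt_succ_iff.mp (Finset.mem_range.mp hk)
        calc ‖(lm A) ^ k * (rm A) ^ (m-k)‖ ≤ ‖(lm A) ^ k‖ * ‖(rm A) ^ (m-k)‖ := norm_mul_le _ _
          _ ≤ ‖lm A‖ ^ k * ‖rm A‖ ^ (m-k) := by
              gcongr
              · exact norm_clm_pow_le _ _
              · exact norm_clm_pow_le _ _
          _ ≤ ρ ^ k * ρ ^ (m-k) := by
              gcongr
              · exact le_max_left _ _
              · exact le_max_right _ _
          _ = ρ ^ m := by rw [← pow_add, Nat.add_sub_cancel' hkm]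
    _ = (m + 1) * ρ ^ m := by rw [Finset.sum_const, Finset.card_range]; push_cast; ring

section Diamond

variable {E : Type*} [Ring E] [Algebra ℝ E]

lemma diamond {L R : E} (h : Commute L R) (m : ℕ) :
    ∑ p ∈ range (m + 1), (((m+1).choose (p+1) : ℕ) : ℝ) • (L ^ (m - p) * (R - L) ^ p)
      = ∑ k ∈ range (m + 1), L ^ k * R ^ (m - k) := by
  induction m with
  | zero => simp
  | succ m ih =>
      set S := R - L with hSdef
      have hLS : Commute L S := h.sub_right (Commute.refl L)
      have pascal : ∀ p : ℕ, (((m+2).choose (p+1) : ℕ) : ℝ)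
          = (((m+1).choose (p+1) : ℕ) : ℝ) + (((m+1).choose p : ℕ) : ℝ) := by
        intro p
        have := Nat.choose_succ_succ (m+1) p
        push_cast [this]
        ring
      have hsplit : ∑ p ∈ range (m + 2), (((m+2).choose (p+1) : ℕ) : ℝ) • (L ^ (m + 1 - p) * S ^ p)
          = (∑ p ∈ range (m + 2), (((m+1).choose (p+1) : ℕ) : ℝ) • (L ^ (m + 1 - p) * S ^ p))
            + ∑ p ∈ range (m + 2), (((m+1).choose p : ℕ) : ℝ) • (L ^ (m + 1 - p) * S ^ p) := by
        rw [← Finset.sum_add_distrib]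
        refine Finset.sum_congr rfl fun p _ => ?_
        rw [pascal, add_smul]
      have hfirst : ∑ p ∈ range (m + 2), (((m+1).choose (p+1) : ℕ) : ℝ) • (L ^ (m + 1 - p) * S ^ p)
          = L * ∑ k ∈ range (m + 1), L ^ k * R ^ (m - k) := by
        rw [Finset.sum_range_succ]
        have hz : (((m+1).choose (m+2) : ℕ) : ℝ) = 0 := by
          rw [Nat.choose_eq_zero_of_lt (by omega)]; simp
        rw [hz, zero_smul, add_zero]
        rw [← ih, Finset.mul_sum]
        refine Finset.sum_congr rfl fun p hp => ?_
        have hpm : p ≤ m := Nat.lt_succ_iff.mp (Finset.mem_range.mp hp)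
        have hidx : m + 1 - p = (m - p) + 1 := by omega
        rw [hidx, pow_succ', mul_assoc, mul_smul_comm]
      have hsecond : ∑ p ∈ range (m + 2), (((m+1).choose p : ℕ) : ℝ) • (L ^ (m + 1 - p) * S ^ p)
          = R ^ (m + 1) := by
        have hadd : S + L = R := by rw [hSdef]; abel
        have hexp := hLS.symm.add_pow (m + 1)
        rw [hadd] at hexp
        rw [hexp]
        refine Finset.sum_congr rfl fun p _ => ?_
        rw [Nat.cast_smul_eq_nsmul, nsmul_eq_mul]
        rw [(Nat.cast_commute ((m+1).choose p) (L ^ (m + 1 - p) * S ^ p)).eq]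
        rw [(hLS.pow_pow (m + 1 - p) p).eq]
      have hc : ∑ k ∈ range (m + 2), L ^ k * R ^ (m + 1 - k)
          = L * (∑ k ∈ range (m + 1), L ^ k * R ^ (m - k)) + R ^ (m + 1) := by
        rw [Finset.sum_range_succ']
        rw [Finset.mul_sum]
        simp only [pow_zero, one_mul, Nat.succ_sub_succ]
        congr 1
        refine Finset.sum_congr rfl fun k _ => ?_
        rw [pow_succ', mul_assoc]
      rw [hsplit, hfirst, hsecond, hc]

end Diamond

lemma coeff_eq (m k : ℕ) (hk : k ≤ m) :
    ((k.factorial : ℝ))⁻¹ * (((m - k + 1).factorial : ℝ))⁻¹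
      = (((m + 1).factorial : ℝ))⁻¹ * (((m+1).choose (m - k + 1) : ℕ) : ℝ) := by
  have h1 : m - k + 1 ≤ m + 1 := by omega
  have h2 := Nat.choose_mul_factorial_mul_factorial h1
  have h3 : m + 1 - (m - k + 1) = k := by omega
  rw [h3] at h2
  have h4 : (((m+1).choose (m - k + 1) : ℕ) : ℝ) * ((m - k + 1).factorial : ℝ)
      * (k.factorial : ℝ) = ((m + 1).factorial : ℝ) := by exact_mod_cast congrArg (Nat.cast (R := ℝ)) h2
  have f1 : ((k.factorial : ℕ) : ℝ) ≠ 0 := Nat.cast_ne_zero.mpr k.factorial_ne_zero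
  have f2 : (((m - k + 1).factorial : ℕ) : ℝ) ≠ 0 := Nat.cast_ne_zero.mpr (m - k + 1).factorial_ne_zero
  have f3 : (((m + 1).factorial : ℕ) : ℝ) ≠ 0 := Nat.cast_ne_zero.mpr (m + 1).factorial_ne_zero
  have hC : (((m+1).choose (m - k + 1) : ℕ) : ℝ)
      = ((m + 1).factorial : ℝ) / (((m - k + 1).factorial : ℝ) * (k.factorial : ℝ)) := by
    rw [eq_div_iff (mul_ne_zero f2 f1)]
    linear_combination h4
  rw [hC]
  field_simp

lemma star2 (A : 𝔸) :
    exp (lm A) * (∑' k : ℕ, (((k+1).factorial : ℝ))⁻¹ • (rm A - lm A) ^ k)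
      = ∑' m : ℕ, (((m+1).factorial : ℝ))⁻¹ • Qop A m := by
  have hLR : Commute (lm A) (rm A) := commute_lm_rm A A
  have hf : Summable (fun a : ℕ => ‖((a.factorial : ℝ))⁻¹ • (lm A) ^ a‖) := by
    refine Summable.of_nonneg_of_le (fun _ => norm_nonneg _) (fun a => ?_)
      (Real.summable_pow_div_factorial ‖lm A‖)
    have hns := norm_smul ((a.factorial : ℝ))⁻¹ ((lm A) ^ a)
    rw [Real.norm_eq_abs, abs_of_nonneg (by positivity)] at hns
    rw [hns, div_eq_inv_mul]
    exact mul_le_mul_of_nonneg_left (norm_clm_pow_le _ _) (by positivity)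
  have hg : Summable (fun k : ℕ => ‖(((k+1).factorial : ℝ))⁻¹ • (rm A - lm A) ^ k‖) := by
    refine Summable.of_nonneg_of_le (fun _ => norm_nonneg _) (fun k => ?_)
      (Real.summable_pow_div_factorial ‖rm A - lm A‖)
    have hns := norm_smul (((k+1).factorial : ℝ))⁻¹ ((rm A - lm A) ^ k)
    rw [Real.norm_eq_abs, abs_of_nonneg (by positivity)] at hns
    rw [hns, div_eq_inv_mul]
    have hk1 : ((k.factorial : ℝ)) ≤ ((k+1).factorial : ℝ) := by
      exact_mod_cast Nat.factorial_le (Nat.le_succ k)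
    have hkpos : (0:ℝ) < (k.factorial : ℝ) := by exact_mod_cast k.factorial_pos
    have : (((k+1).factorial : ℝ))⁻¹ ≤ ((k.factorial : ℝ))⁻¹ :=
      inv_anti₀ hkpos hk1
    exact mul_le_mul this (norm_clm_pow_le _ _) (norm_nonneg _) (by positivity)
  rw [exp_eq_tsum ℝ]
  rw [tsum_mul_tsum_eq_tsum_sum_antidiagonal_of_summable_norm hf hg]
  refine tsum_congr fun m => ?_
  rw [Finset.Nat.sum_antidiagonal_eq_sum_range_succ_mk]
  have hterm : ∀ k ∈ range (m+1),
      (((k.factorial : ℝ))⁻¹ • (lm A) ^ k) * ((((m - k + 1).factorial : ℝ))⁻¹ • (rm A - lm A) ^ (m - k))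
        = (((m+1).factorial : ℝ))⁻¹ • ((((m+1).choose (m - k + 1) : ℕ) : ℝ)
            • ((lm A) ^ k * (rm A - lm A) ^ (m - k))) := by
    intro k hk
    have hkm : k ≤ m := Nat.lt_succ_iff.mp (Finset.mem_range.mp hk)
    ext H
    simp only [ContinuousLinearMap.mul_apply, ContinuousLinearMap.smul_apply, map_smul, smul_smul]
    rw [mul_comm (((m - k + 1).factorial : ℝ))⁻¹ ((k.factorial : ℝ))⁻¹, coeff_eq m k hkm]
  rw [Finset.sum_congr rfl hterm, ← Finset.smul_sum]
  congr 1
  have hrefl := Finset.sum_range_reflect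
    (fun p => (((m+1).choose (p+1) : ℕ) : ℝ) • ((lm A) ^ (m - p) * (rm A - lm A) ^ p)) (m+1)
  have hmatch : ∀ k ∈ range (m+1),
      (((m+1).choose (m - k + 1) : ℕ) : ℝ) • ((lm A) ^ k * (rm A - lm A) ^ (m - k))
        = (((m+1).choose ((m + 1 - 1 - k) + 1) : ℕ) : ℝ)
            • ((lm A) ^ (m - (m + 1 - 1 - k)) * (rm A - lm A) ^ (m + 1 - 1 - k)) := by
    intro k hk
    have hkm : k ≤ m := Nat.lt_succ_iff.mp (Finset.mem_range.mp hk)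
    have e1 : m + 1 - 1 - k = m - k := by omega
    have e2 : m - (m - k) = k := Nat.sub_sub_self hkm
    rw [e1, e2]
  rw [Finset.sum_congr rfl hmatch, hrefl, diamond hLR m]
  rfl

lemma ad_iterate (A D : 𝔸) (k : ℕ) :
    (fun Y : 𝔸 => A * Y - Y * A)^[k] D = ((lm A - rm A) ^ k) D := by
  induction k with
  | zero => simp
  | succ k ih =>
      rw [Function.iterate_succ_apply', ih, pow_succ']
      simp [ContinuousLinearMap.mul_apply, ContinuousLinearMap.sub_apply]

lemma summable_J (A : 𝔸) :
    Summable fun k : ℕ => (((k+1).factorial : ℝ))⁻¹ • (rm A - lm A) ^ k := by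
  refine Summable.of_norm_bounded (g := fun k => ‖rm A - lm A‖ ^ k / k.factorial)
    (Real.summable_pow_div_factorial _) fun k => ?_
  have hns := norm_smul (((k+1).factorial : ℝ))⁻¹ ((rm A - lm A) ^ k)
  rw [Real.norm_eq_abs, abs_of_nonneg (by positivity)] at hns
  rw [hns, div_eq_inv_mul]
  have hk1 : ((k.factorial : ℝ)) ≤ ((k+1).factorial : ℝ) := by
    exact_mod_cast Nat.factorial_le (Nat.le_succ k)
  have hkpos : (0:ℝ) < (k.factorial : ℝ) := by exact_mod_cast k.factorial_pos
  exact mul_le_mul (inv_anti₀ hkpos hk1) (norm_clm_pow_le _ _) (norm_nonneg _)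
    (by positivity)

lemma summable_QopS (A : 𝔸) :
    Summable fun m : ℕ => (((m+1).factorial : ℝ))⁻¹ • Qop A m := by
  refine Summable.of_norm_bounded
    (g := fun m => (max ‖lm A‖ ‖rm A‖) ^ m / m.factorial)
    (Real.summable_pow_div_factorial _) fun m => ?_
  have hns := norm_smul (((m+1).factorial : ℝ))⁻¹ (Qop A m)
  rw [Real.norm_eq_abs, abs_of_nonneg (by positivity)] at hns
  rw [hns]
  have h2 := norm_Qop_le A m
  have hfac : (((m+1).factorial : ℝ)) = (m+1) * m.factorial := by
    push_cast [Nat.factorial_succ]; ring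
  have hfacpos : (0:ℝ) < m.factorial := by exact_mod_cast m.factorial_pos
  have hstep : (((m+1).factorial : ℝ))⁻¹ * ‖Qop A m‖
      ≤ (((m+1).factorial : ℝ))⁻¹ * ((m+1) * (max ‖lm A‖ ‖rm A‖) ^ m) :=
    mul_le_mul_of_nonneg_left h2 (by positivity)
  refine hstep.trans (le_of_eq ?_)
  rw [hfac]
  have hm1 : (0:ℝ) < (m:ℝ) + 1 := by positivity
  field_simp

lemma exp_mul_eq (A Z : 𝔸) : exp A * Z = (exp (lm A)) Z := by
  have hcont : Continuous (lmRing (𝔸 := 𝔸)) := (ContinuousLinearMap.mul ℝ 𝔸).continuous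
  have h : lm (exp A) = exp (lm A) := map_exp_of_mem_ball (𝕂 := ℝ) (lmRing (𝔸 := 𝔸)) hcont A
    ((expSeries_radius_eq_top ℝ 𝔸).symm ▸ edist_lt_top _ _)
  calc exp A * Z = (lm (exp A)) Z := rfl
    _ = (exp (lm A)) Z := by rw [h]

lemma deriv_value (A D : 𝔸) :
    (∑' m : ℕ, Pd m A) D
      = exp A * ∑' k : ℕ, ((-1:ℝ) ^ k * (((k+1).factorial : ℝ))⁻¹) •
          (fun Y : 𝔸 => A * Y - Y * A)^[k] D := by
  have hR : ∀ k : ℕ, ((-1:ℝ) ^ k * (((k+1).factorial : ℝ))⁻¹) •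
      (fun Y : 𝔸 => A * Y - Y * A)^[k] D
      = ((((k+1).factorial : ℝ))⁻¹ • (rm A - lm A) ^ k) D := by
    intro k
    have hx : ∀ (j : ℕ) (v : 𝔸),
        ((rm A - lm A) ^ j) v = ((-1:ℝ) ^ j) • (((lm A - rm A) ^ j) v) := by
      intro j
      induction j with
      | zero => intro v; simp
      | succ j ih =>
          intro v
          have hneg : (rm A - lm A) v = -((lm A - rm A) v) := by
            simp only [ContinuousLinearMap.sub_apply]; abel
          simp only [pow_succ, ContinuousLinearMap.mul_apply]
          rw [hneg, map_neg, ih, ← neg_smul]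
          congr 1
          ring
    rw [ad_iterate A D k, ContinuousLinearMap.smul_apply, hx k D, smul_smul]
    congr 1
    ring
  rw [tsum_congr hR]
  have e3 := ((ContinuousLinearMap.apply ℝ 𝔸 D).map_tsum (summable_J A))
  simp only [ContinuousLinearMap.apply_apply] at e3
  rw [← e3]
  have e1 := ((ContinuousLinearMap.apply ℝ 𝔸 D).map_tsum (summable_Pd A))
  simp only [ContinuousLinearMap.apply_apply] at e1
  rw [e1]
  have s2 : Summable fun m : ℕ => Pd m A D := by
    have := (summable_Pd A).map (ContinuousLinearMap.apply ℝ 𝔸 D)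
      (ContinuousLinearMap.apply ℝ 𝔸 D).continuous
    simpa only [Function.comp_def, ContinuousLinearMap.apply_apply] using this
  rw [s2.tsum_eq_zero_add]
  have hz : Pd 0 A D = (0:𝔸) := by simp [Pd]
  rw [hz, zero_add]
  have hterm2 : ∀ m : ℕ, Pd (m+1) A D = ((((m+1).factorial : ℝ))⁻¹ • Qop A m) D := by
    intro m
    show ((((m+1).factorial : ℝ))⁻¹ • Qd m A) D = _
    rw [Qd_eq_Qop]
  rw [tsum_congr hterm2]
  have e2 := ((ContinuousLinearMap.apply ℝ 𝔸 D).map_tsum (summable_QopS A))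
  simp only [ContinuousLinearMap.apply_apply] at e2
  rw [← e2]
  rw [exp_mul_eq, ← ContinuousLinearMap.mul_apply, star2]

end ExpDerivAux

attribute [local instance] Matrix.linftyOpNormedRing Matrix.linftyOpNormedAlgebra

/-- For a differentiable matrix-valued curve `X(t)`,
`d/dt e^{X(t)} = e^{X(t)} · Σ_{k≥0} (−1)^k (ad_{X(t)})^k (Ẋ(t)) / (k+1)!`,
i.e. `d/dt e^{X} = e^{X} J(−ad_X)(Ẋ)` with `J(M) = Σ_{k≥0} M^k/(k+1)!`. -/
theorem deriv_exp_eq_exp_mul_J (n : ℕ) (X : ℝ → Matrix (Fin n) (Fin n) ℝ)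
    (D : Matrix (Fin n) (Fin n) ℝ) (t : ℝ) (hX : HasDerivAt X D t) :
    HasDerivAt (fun s => NormedSpace.exp (X s))
      (NormedSpace.exp (X t) *
        ∑' k : ℕ, ((-1 : ℝ) ^ k * ((k + 1).factorial : ℝ)⁻¹) •
          (fun Y : Matrix (Fin n) (Fin n) ℝ => X t * Y - Y * X t)^[k] D) t := by
  have h := (ExpDerivAux.hasFDerivAt_exp_aux (X t)).comp_hasDerivAt t hX
  rw [ExpDerivAux.deriv_value (X t) D] at h
  exact h
end

section
/- For the discrete transition matrix Φ = [[I,0,0,0],[½g^∧δt², I, Iδt, 0],[g^∧δt, 0, I, 0],[0,0,0,I]] (12×12, blocks 3×3) and observation matrix H = [0, −I, 0, I], the observability matrix with rows H, HΦ, HΦ², … has rank at most 9; in particular its kernel contains the 3-dimensional subspace {(0, u, 0, u) : u ∈ ℝ³} and additionally the direction corresponding to rotations about gravity. -/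
/-- The hat map on `ℝ³`. -/
def hat (g : Fin 3 → ℝ) : Matrix (Fin 3) (Fin 3) ℝ :=
  !![0, -g 2, g 1; g 2, 0, -g 0; -g 1, g 0, 0]

/-- The 12×12 discrete transition matrix
`Φ = [[I,0,0,0],[½g^∧δt², I, Iδt, 0],[g^∧δt, 0, I, 0],[0,0,0,I]]` (3×3 blocks). -/
noncomputable def Phi (g : Fin 3 → ℝ) (δt : ℝ) :
    Matrix (Fin 4 × Fin 3) (Fin 4 × Fin 3) ℝ :=
  Matrix.of fun p q =>
    (![![1, 0, 0, 0],
       ![(δt ^ 2 / 2) • hat g, 1, δt • (1 : Matrix (Fin 3) (Fin 3) ℝ), 0],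
       ![δt • hat g, 0, 1, 0],
       ![0, 0, 0, 1]] p.1 q.1 : Matrix (Fin 3) (Fin 3) ℝ) p.2 q.2

/-- The observation matrix `H = [0, −I, 0, I]`. -/
def Hmat : Matrix (Fin 3) (Fin 4 × Fin 3) ℝ :=
  Matrix.of fun i q =>
    (![0, -1, 0, (1 : Matrix (Fin 3) (Fin 3) ℝ)] q.1 : Matrix (Fin 3) (Fin 3) ℝ) i q.2

/-- The observability map, stacking `H Φ^k` for `k = 0, 1, 2, …`. -/
noncomputable def Obs (g : Fin 3 → ℝ) (δt : ℝ) :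
    (Fin 4 × Fin 3 → ℝ) →ₗ[ℝ] (ℕ → Fin 3 → ℝ) :=
  LinearMap.pi fun k => (Hmat * (Phi g δt) ^ k).mulVecLin


lemma phi_fix_u (g : Fin 3 → ℝ) (δt : ℝ) (u : Fin 3 → ℝ) :
    (Phi g δt).mulVec (fun p : Fin 4 × Fin 3 => if p.1 = 1 ∨ p.1 = 3 then u p.2 else 0)
      = fun p => if p.1 = 1 ∨ p.1 = 3 then u p.2 else 0 := by
  funext ⟨i, j⟩
  simp only [Matrix.mulVec, dotProduct, Fintype.sum_prod_type, Fin.sum_univ_four,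
    Fin.sum_univ_three, Phi, hat, Matrix.of_apply]
  fin_cases i <;> fin_cases j <;>
    simp (config := {decide := true}) only [Matrix.cons_val, Fin.isValue, Fin.mk_zero, Fin.mk_one, Fin.reduceFinMk] <;> simp [Matrix.one_apply, Matrix.smul_apply]

lemma H_kill_u (u : Fin 3 → ℝ) :
    Hmat.mulVec (fun p : Fin 4 × Fin 3 => if p.1 = 1 ∨ p.1 = 3 then u p.2 else 0) = 0 := by
  funext i
  simp only [Matrix.mulVec, dotProduct, Fintype.sum_prod_type, Fin.sum_univ_four,
    Fin.sum_univ_three, Hmat, Matrix.of_apply]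
  fin_cases i <;> simp (config := {decide := true}) only [Matrix.cons_val, Fin.isValue, Fin.mk_zero, Fin.mk_one, Fin.reduceFinMk] <;> simp [Matrix.one_apply, Matrix.smul_apply]

lemma phi_fix_g (g : Fin 3 → ℝ) (δt : ℝ) :
    (Phi g δt).mulVec (fun p : Fin 4 × Fin 3 => if p.1 = 0 then g p.2 else 0)
      = fun p => if p.1 = 0 then g p.2 else 0 := by
  funext ⟨i, j⟩
  simp only [Matrix.mulVec, dotProduct, Fintype.sum_prod_type, Fin.sum_univ_four,
    Fin.sum_univ_three, Phi, hat, Matrix.of_apply]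
  fin_cases i <;> fin_cases j <;>
    simp (config := {decide := true}) only [Matrix.cons_val, Fin.isValue, Fin.mk_zero, Fin.mk_one, Fin.reduceFinMk] <;> simp [Matrix.one_apply, Matrix.smul_apply] <;> ring

lemma H_kill_g (g : Fin 3 → ℝ) :
    Hmat.mulVec (fun p : Fin 4 × Fin 3 => if p.1 = 0 then g p.2 else 0) = 0 := by
  funext i
  simp only [Matrix.mulVec, dotProduct, Fintype.sum_prod_type, Fin.sum_univ_four,
    Fin.sum_univ_three, Hmat, Matrix.of_apply]
  fin_cases i <;> simp (config := {decide := true}) only [Matrix.cons_val, Fin.isValue, Fin.mk_zero, Fin.mk_one, Fin.reduceFinMk] <;> simp [Matrix.one_apply, Matrix.smul_apply]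

lemma mem_ker_of_fix (g : Fin 3 → ℝ) (δt : ℝ) (v : Fin 4 × Fin 3 → ℝ)
    (hfix : (Phi g δt).mulVec v = v) (hH : Hmat.mulVec v = 0) :
    v ∈ LinearMap.ker (Obs g δt) := by
  have hpow : ∀ k : ℕ, ((Phi g δt) ^ k).mulVec v = v := by
    intro k
    induction k with
    | zero => simp
    | succ n ih =>
      rw [pow_succ, ← Matrix.mulVec_mulVec, hfix, ih]
  rw [LinearMap.mem_ker]
  funext k
  show (Hmat * (Phi g δt) ^ k).mulVec v = 0
  rw [← Matrix.mulVec_mulVec, hpow, hH]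

/-- The observability matrix with rows `H, HΦ, HΦ², …` has rank at most 9; in
particular its kernel contains the 3-dimensional subspace `{(0,u,0,u) : u ∈ ℝ³}` and
additionally the direction corresponding to rotations about gravity. -/
theorem observability_rank_deficient (g : Fin 3 → ℝ) (δt : ℝ) (hδt : 0 < δt) :
    (∀ u : Fin 3 → ℝ,
      (fun p : Fin 4 × Fin 3 => if p.1 = 1 ∨ p.1 = 3 then u p.2 else 0)
        ∈ LinearMap.ker (Obs g δt))
    ∧ (fun p : Fin 4 × Fin 3 => if p.1 = 0 then g p.2 else 0) ∈ LinearMap.ker (Obs g δt)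
    ∧ Module.rank ℝ (LinearMap.range (Obs g δt)) ≤ 9 := by
  have hker : ∀ u : Fin 3 → ℝ,
      (fun p : Fin 4 × Fin 3 => if p.1 = 1 ∨ p.1 = 3 then u p.2 else 0)
        ∈ LinearMap.ker (Obs g δt) :=
    fun u => mem_ker_of_fix g δt _ (phi_fix_u g δt u) (H_kill_u u)
  refine ⟨hker, mem_ker_of_fix g δt _ (phi_fix_g g δt) (H_kill_g g), ?_⟩
  set f := Obs g δt
  have hL : ∃ L : (Fin 3 → ℝ) →ₗ[ℝ] (LinearMap.ker f), Function.Injective L := by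
    refine ⟨{ toFun := fun u => ⟨fun p => if p.1 = 1 ∨ p.1 = 3 then u p.2 else 0, hker u⟩
              map_add' := ?_, map_smul' := ?_ }, ?_⟩
    · intro u v; ext p; by_cases h : p.1 = 1 ∨ p.1 = 3 <;> simp [h]
    · intro c u; ext p; by_cases h : p.1 = 1 ∨ p.1 = 3 <;> simp [h]
    · intro u v huv
      funext j
      have h1 := congrArg Subtype.val huv
      have h2 := congrFun h1 (1, j)
      simpa using h2
  obtain ⟨L, hLinj⟩ := hL
  have h3 : 3 ≤ Module.finrank ℝ (LinearMap.ker f) := by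
    have := LinearMap.finrank_le_finrank_of_injective hLinj
    simpa using this
  have h12 : Module.finrank ℝ (LinearMap.range f) + Module.finrank ℝ (LinearMap.ker f)
      = 12 := by
    rw [LinearMap.finrank_range_add_finrank_ker]
    simp
  have h9 : Module.finrank ℝ (LinearMap.range f) ≤ 9 := by omega
  calc Module.rank ℝ (LinearMap.range f)
      = Module.finrank ℝ (LinearMap.range f) := (Module.finrank_eq_rank ℝ _).symm
    _ ≤ 9 := by exact_mod_cast h9
end
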